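/- Let A be a bounded operator on a complex Hilbert space H that is quasi *-paranormal (‖A*Ax‖² ≤ ‖A³x‖·‖Ax‖ for all x). If A is quasinilpotent (spectral radius 0), then A = 0. -/

import Mathlib

open scoped ComplexInnerProductSpace

theorem quasi_star_paranormal_quasinilpotent_eq_zero
    {H : Type*} [NormedAddCommGroup H] [InnerProductSpace ℂ H] [CompleteSpace H]
    (A : H →L[ℂ] H)
    (hqsp : ∀ x : H, ‖(ContinuousLinearMap.adjoint A) (A x)‖ ^ 2 ≤ ‖(A ^ 3) x‖ * ‖A x‖)
    (hquasi : spectralRadius ℂ A = 0) :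
    A = 0 := by
  -- Step 1: the cube inequality ‖Ay‖³ ≤ ‖A³y‖ ‖y‖²
  have key : ∀ y : H, ‖A y‖ ^ 3 ≤ ‖(A ^ 3) y‖ * ‖y‖ ^ 2 := by
    intro y
    have hcs : ‖A y‖ ^ 2 ≤ ‖(ContinuousLinearMap.adjoint A) (A y)‖ * ‖y‖ := by
      have h1 : (⟪A y, A y⟫ : ℂ) = ⟪(ContinuousLinearMap.adjoint A) (A y), y⟫ :=
        (ContinuousLinearMap.adjoint_inner_left A y (A y)).symm
      calc ‖A y‖ ^ 2 = ‖(⟪A y, A y⟫ : ℂ)‖ := by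
            rw [inner_self_eq_norm_sq_to_K]; simp
        _ = ‖(⟪(ContinuousLinearMap.adjoint A) (A y), y⟫ : ℂ)‖ := by rw [h1]
        _ ≤ _ := norm_inner_le_norm _ _
    have h2 := hqsp y
    set a := ‖A y‖
    set u := ‖(ContinuousLinearMap.adjoint A) (A y)‖
    set t := ‖(A ^ 3) y‖
    set n := ‖y‖
    have ha : 0 ≤ a := norm_nonneg _
    have hu : 0 ≤ u := norm_nonneg _
    have ht : 0 ≤ t := norm_nonneg _
    have hn : 0 ≤ n := norm_nonneg _
    rcases eq_or_lt_of_le ha with h | h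
    · simp [← h]; positivity
    · nlinarith [sq_nonneg (a^2 - u*n), mul_nonneg hn hn, mul_pos h h]
  -- Suppose A ≠ 0
  by_contra hA
  obtain ⟨x, hx⟩ : ∃ x : H, A x ≠ 0 := by
    by_contra h
    push_neg at h
    exact hA (ContinuousLinearMap.ext fun x => by simp [h x])
  -- the sequence b k = ‖A^k x‖
  set b : ℕ → ℝ := fun k => ‖(A ^ k) x‖ with hb
  have happ : ∀ k : ℕ, (A ^ (k + 1)) x = A ((A ^ k) x) := by
    intro k; rw [pow_succ']; rfl
  have happ3 : ∀ k : ℕ, (A ^ (k + 3)) x = (A ^ 3) ((A ^ k) x) := by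
    intro k
    have : A ^ (k + 3) = (A ^ 3) * (A ^ k) := by rw [← pow_add, Nat.add_comm]
    rw [this]; rfl
  have hb3 : ∀ k : ℕ, b (k + 1) ^ 3 ≤ b (k + 3) * b k ^ 2 := by
    intro k
    have := key ((A ^ k) x)
    rw [← happ k, ← happ3 k] at this
    exact this
  have hbnn : ∀ k, 0 ≤ b k := fun k => norm_nonneg _
  -- positivity of all b k
  have hb1 : 0 < b 1 := by
    have : (A ^ 1) x = A x := by simp
    simp only [hb, this]
    exact norm_pos_iff.mpr hx
  have hb0 : 0 < b 0 := by
    have hx0 : x ≠ 0 := fun h => hx (by simp [h])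
    simp only [hb, pow_zero]
    simpa using norm_pos_iff.mpr hx0
  have hb3p : 0 < b 3 := by
    have h := hb3 0
    nlinarith [hbnn 3, hbnn 0, pow_pos hb1 3]
  have hb2 : 0 < b 2 := by
    rcases (hbnn 2).lt_or_eq with h | h
    · exact h
    · exfalso
      have h2 : (A ^ 2) x = 0 := by
        have := h.symm; exact norm_eq_zero.mp (by simpa [hb] using this)
      have h3 : (A ^ 3) x = 0 := by
        have : (A ^ (2 + 1)) x = A ((A ^ 2) x) := happ 2
        rw [h2] at this; simpa using this
      have : b 3 = 0 := by show ‖(A ^ 3) x‖ = 0; rw [h3, norm_zero]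
      exact hb3p.ne' this
  have hbpos : ∀ k, 0 < b k := by
    have step : ∀ k, 0 < b k → 0 < b (k + 2) := by
      intro k hk
      rcases k with _ | j
      · exact hb2
      · have h := hb3 j
        nlinarith [hbnn (j + 3), hbnn j, pow_pos hk 3]
    intro k
    induction k using Nat.strong_induction_on with
    | _ k ih =>
      match k with
      | 0 => exact hb0
      | 1 => exact hb1
      | (j + 2) => exact step j (ih j (by omega))
  -- the ratio R k = b(k+1) b(k+2) / b k ^ 2 is nondecreasing
  set C : ℝ := b 1 * b 2 / b 0 ^ 2 with hC
  have hCpos : 0 < C := div_pos (mul_pos hb1 hb2) (pow_pos hb0 2)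
  have hR : ∀ k, C ≤ b (k + 1) * b (k + 2) / b k ^ 2 := by
    intro k
    induction k with
    | zero => exact le_of_eq hC
    | succ j ih =>
      refine ih.trans ?_
      rw [div_le_div_iff₀ (pow_pos (hbpos j) 2) (pow_pos (hbpos (j + 1)) 2)]
      have h := hb3 j
      nlinarith [hbnn (j + 2), pow_pos (hbpos j) 2, hbpos (j+1), hbpos (j+2), hbpos (j+3)]
  -- c = min(√C, 1)
  set c : ℝ := min (Real.sqrt C) 1 with hc
  have hcpos : 0 < c := lt_min (Real.sqrt_pos.mpr hCpos) one_pos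
  have hc1 : c ≤ 1 := min_le_right _ _
  have hcsq : c ≤ Real.sqrt C := min_le_left _ _
  have hsqC : Real.sqrt C * Real.sqrt C = C := Real.mul_self_sqrt hCpos.le
  -- chain: for every j there is m ≥ j with b m ≥ b 0 * c ^ m
  have chain : ∀ j : ℕ, ∃ m : ℕ, j ≤ m ∧ b 0 * c ^ m ≤ b m := by
    intro j
    induction j with
    | zero => exact ⟨0, le_refl _, by simp⟩
    | succ i ih =>
      obtain ⟨m, him, hbm⟩ := ih
      have hprod : C * b m ^ 2 ≤ b (m + 1) * b (m + 2) := by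
        have := hR m
        rw [le_div_iff₀ (pow_pos (hbpos m) 2)] at this
        linarith
      have hstep : ∃ m', (m + 1 ≤ m' ∧ m' ≤ m + 2) ∧ Real.sqrt C * b m ≤ b m' := by
        by_cases hcase : Real.sqrt C * b m ≤ b (m + 1)
        · exact ⟨m + 1, ⟨le_refl _, by omega⟩, hcase⟩
        · refine ⟨m + 2, ⟨by omega, le_refl _⟩, ?_⟩
          push_neg at hcase
          nlinarith [hbpos (m + 1), hbpos (m + 2), hbpos m,
            Real.sqrt_nonneg C, mul_pos (Real.sqrt_pos.mpr hCpos) (hbpos m)]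
      obtain ⟨m', ⟨hm1, hm2⟩, hbm'⟩ := hstep
      refine ⟨m', by omega, ?_⟩
      have h1 : b 0 * c ^ m' ≤ b 0 * (c ^ m * Real.sqrt C) := by
        apply mul_le_mul_of_nonneg_left _ hb0.le
        have : c ^ m' ≤ c ^ m * c := by
          calc c ^ m' ≤ c ^ (m + 1) := by
                exact pow_le_pow_of_le_one hcpos.le hc1 hm1
            _ = c ^ m * c := by ring
        exact this.trans (mul_le_mul_of_nonneg_left hcsq (pow_nonneg hcpos.le m))
      refine h1.trans ?_
      calc b 0 * (c ^ m * Real.sqrt C) = Real.sqrt C * (b 0 * c ^ m) := by ring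
        _ ≤ Real.sqrt C * b m := by
            exact mul_le_mul_of_nonneg_left hbm (Real.sqrt_nonneg C)
        _ ≤ b m' := hbm'
  -- so ‖A^m‖ ≥ c^m for arbitrarily large m
  have hnorm : ∀ j : ℕ, ∃ m : ℕ, j ≤ m ∧ c ^ m ≤ ‖A ^ m‖ := by
    intro j
    obtain ⟨m, hjm, hbm⟩ := chain j
    refine ⟨m, hjm, ?_⟩
    have hle : b m ≤ ‖A ^ m‖ * b 0 := by
      simpa [hb] using (A ^ m).le_opNorm x
    have := hbm.trans hle
    rw [mul_comm (‖A ^ m‖) (b 0)] at this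
    exact le_of_mul_le_mul_left this hb0
  -- contradiction with Gelfand's formula
  have hG := spectrum.pow_norm_pow_one_div_tendsto_nhds_spectralRadius A
  rw [hquasi] at hG
  have hev : ∀ᶠ n : ℕ in Filter.atTop,
      ENNReal.ofReal (‖A ^ n‖ ^ (1 / n : ℝ)) < ENNReal.ofReal c := by
    apply hG.eventually_lt_const
    simpa using ENNReal.ofReal_pos.mpr hcpos
  obtain ⟨N, hN⟩ := Filter.eventually_atTop.mp hev
  obtain ⟨m, hm, hAm⟩ := hnorm (N + 1)
  have hm1 : 1 ≤ m := by omega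
  have hlt : ‖A ^ m‖ ^ (1 / m : ℝ) < c := by
    have := hN m (by omega)
    rw [ENNReal.ofReal_lt_ofReal_iff hcpos] at this
    exact this
  -- but ‖A^m‖ ≥ c^m gives ‖A^m‖^(1/m) ≥ c
  have hge : c ≤ ‖A ^ m‖ ^ (1 / m : ℝ) := by
    have hmpos : (0 : ℝ) < m := by exact_mod_cast hm1
    have h1 : (c ^ m : ℝ) = c ^ (m : ℝ) := by
      rw [← Real.rpow_natCast]
    have h2 : (c ^ (m : ℝ)) ^ (1 / m : ℝ) = c := by
      rw [← Real.rpow_mul hcpos.le, mul_one_div, div_self hmpos.ne', Real.rpow_one]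
    calc c = (c ^ (m : ℝ)) ^ (1 / m : ℝ) := h2.symm
      _ ≤ ‖A ^ m‖ ^ (1 / m : ℝ) := by
          apply Real.rpow_le_rpow (Real.rpow_nonneg hcpos.le _)
          · rw [← h1]; exact hAm
          · positivity
  exact absurd hlt (not_lt.mpr hge)
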